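/- For N ≥ 2, the function Δ(s) = sqrt((1−2s)² + (4/N)·s·(1−s)) on [0,1] satisfies the measure condition with constant C = sqrt(N/(N−1)): for every x > 0, the Lebesgue measure of {s ∈ [0,1] : Δ(s) ≤ x} is at most sqrt(N/(N−1))·x. -/

import Mathlib

open MeasureTheory Set

/-- The Grover spectral gap `Δ(s) = √((1−2s)² + (4/N)s(1−s))` satisfies the measure
condition with constant `√(N/(N−1))`. -/
theorem grover_gap_measure_condition (N : ℝ) (hN : 2 ≤ N) (x : ℝ) (hx : 0 < x) :
    (volume {s ∈ Icc (0:ℝ) 1 |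
        Real.sqrt ((1 - 2*s)^2 + (4/N) * s * (1 - s)) ≤ x}).toReal
      ≤ Real.sqrt (N / (N - 1)) * x := by
  have hNpos : (0:ℝ) < N := by linarith
  have hden : (0:ℝ) < N - 1 := by linarith
  set r := Real.sqrt (N / (N - 1)) * x / 2 with hr
  have hrnn : 0 ≤ r := by positivity
  have hr2 : r ^ 2 = N / (N - 1) * x ^ 2 / 4 := by
    rw [hr, div_pow, mul_pow, Real.sq_sqrt (by positivity)]
    norm_num
  have hsub : {s ∈ Icc (0:ℝ) 1 |
      Real.sqrt ((1 - 2*s)^2 + (4/N) * s * (1 - s)) ≤ x} ⊆ Icc (1/2 - r) (1/2 + r) := by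
    rintro s ⟨⟨hs0, hs1⟩, hle⟩
    have hEnn : 0 ≤ (1 - 2*s)^2 + (4/N) * s * (1 - s) := by
      have : 0 ≤ (4/N) * s * (1 - s) :=
        mul_nonneg (mul_nonneg (by positivity) hs0) (by linarith)
      nlinarith [sq_nonneg (1 - 2*s)]
    have hE : (1 - 2*s)^2 + (4/N) * s * (1 - s) ≤ x ^ 2 := by
      have h := Real.sq_sqrt hEnn
      nlinarith [Real.sqrt_nonneg ((1 - 2*s)^2 + (4/N) * s * (1 - s))]
    have hmul : N * ((1 - 2*s)^2 + (4/N) * s * (1 - s))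
        = 4*(N-1)*(s - 1/2)^2 + 1 := by
      field_simp
      ring
    have hE' : 4*(N-1)*(s - 1/2)^2 + 1 ≤ N * x ^ 2 := by
      have := mul_le_mul_of_nonneg_left hE hNpos.le
      rw [hmul] at this
      linarith
    have hkey : (s - 1/2) ^ 2 ≤ r ^ 2 := by
      rw [hr2, show N / (N - 1) * x ^ 2 / 4 = N * x ^ 2 / (4 * (N - 1)) by
        field_simp, le_div_iff₀ (by linarith)]
      nlinarith
    have habs : |s - 1/2| ≤ r := by
      nlinarith [sq_abs (s - 1/2), abs_nonneg (s - 1/2)]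
    have := abs_le.mp habs
    constructor <;> [linarith [this.1]; linarith [this.2]]
  calc (volume {s ∈ Icc (0:ℝ) 1 |
        Real.sqrt ((1 - 2*s)^2 + (4/N) * s * (1 - s)) ≤ x}).toReal
      ≤ (volume (Icc (1/2 - r) (1/2 + r))).toReal := by
        apply ENNReal.toReal_mono
        · simp [Real.volume_Icc]
        · exact measure_mono hsub
    _ = 2 * r := by
        rw [Real.volume_Icc, ENNReal.toReal_ofReal (by linarith)]
        ring
    _ = Real.sqrt (N / (N - 1)) * x := by rw [hr]; ring
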